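/- For real d ≥ 0 and angles 0 < α < π < β < 2π with α + β < 2π and θ = (α+β)/2, we have cos(α/2)·cos((2π-β)/2) + sin(α/2)·sin((2π-β)/2)·cosh(d) ≤ -cos²(θ/2) + sin²(θ/2)·cosh(d). -/
import Mathlib


open Real

theorem opposite_reflected_balanced_bound (d α β θ : ℝ) (hd : 0 ≤ d)
    (hα0 : 0 < α) (hαπ : α < π) (hπβ : π < β) (hβ : β < 2 * π)
    (hsum : α + β < 2 * π) (hθ : θ = (α + β) / 2) :
    Real.cos (α / 2) * Real.cos ((2 * π - β) / 2)
      + Real.sin (α / 2) * Real.sin ((2 * π - β) / 2) * Real.cosh d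
      ≤ -(Real.cos (θ / 2)) ^ 2 + (Real.sin (θ / 2)) ^ 2 * Real.cosh d := by
  have e1 : (2 * π - β) / 2 = π - β / 2 := by ring
  rw [e1, Real.cos_pi_sub, Real.sin_pi_sub]
  set a := α / 2
  set b := β / 2
  have ht : θ / 2 = (a + b) / 2 := by rw [hθ]; ring
  rw [ht]
  have hsub : Real.cos (a - b) = Real.cos a * Real.cos b + Real.sin a * Real.sin b :=
    Real.cos_sub a b
  have hadd : Real.cos (a + b) = Real.cos a * Real.cos b - Real.sin a * Real.sin b :=
    Real.cos_add a b
  have hdbl : Real.cos ((a + b) / 2) ^ 2 = 1 / 2 + Real.cos (a + b) / 2 := by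
    have h := Real.cos_sq ((a + b) / 2)
    rwa [show 2 * ((a + b) / 2) = a + b by ring] at h
  have hdbl2 : Real.sin ((a + b) / 2) ^ 2 + Real.cos ((a + b) / 2) ^ 2 = 1 :=
    Real.sin_sq_add_cos_sq _
  have hc1 : Real.cos (a - b) ≤ 1 := Real.cos_le_one _
  have hch : 1 ≤ Real.cosh d := Real.one_le_cosh d
  nlinarith [mul_nonneg (sub_nonneg.2 hc1) (sub_nonneg.2 hch)]
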